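/- The parallels through the vertices A, B, C of a triangle to the corresponding sides B₁C₁, C₁A₁, A₁B₁ of its first Brocard triangle are concurrent at a point S (the Steiner point), and S lies on the circumscribed circle of triangle ABC. -/

import Mathlib

open EuclideanGeometry Real Affine
open scoped RealInnerProductSpace

noncomputable section

abbrev Pt := EuclideanSpace ℝ (Fin 2)

/-- If `x` lies on the perpendicular "bisector" of two points `p, q` on the circle of
radius `R` centred at the origin, and `k - x` is parallel to `p - q`, then `x` is the
projection of `k` onto that bisector, given by an explicit formula. -/
lemma proj_eq {R : ℝ} (hR : 0 < R) {p q k x : ℂ}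
    (hp : ‖p‖ = R) (hq : ‖q‖ = R) (hpq : p ≠ q)
    (h1 : ‖x - p‖ = ‖x - q‖)
    (h2 : ∃ t : ℝ, k - x = (t : ℂ) * (p - q)) :
    x = (k + (starRingEnd ℂ) k * p * q / (R : ℂ) ^ 2) / 2 := by
  obtain ⟨t, ht⟩ := h2
  have hR0 : (R : ℂ) ≠ 0 := Complex.ofReal_ne_zero.mpr hR.ne'
  have hqp : q - p ≠ 0 := sub_ne_zero.mpr (Ne.symm hpq)
  have ht' : (starRingEnd ℂ) k - (starRingEnd ℂ) x
      = (t : ℂ) * ((starRingEnd ℂ) p - (starRingEnd ℂ) q) := by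
    have := congrArg (starRingEnd ℂ) ht
    simpa [map_sub, map_mul, Complex.conj_ofReal] using this
  have e3 : (x - p) * ((starRingEnd ℂ) x - (starRingEnd ℂ) p)
      = (x - q) * ((starRingEnd ℂ) x - (starRingEnd ℂ) q) := by
    have h1' : (x - p) * (starRingEnd ℂ) (x - p) = (x - q) * (starRingEnd ℂ) (x - q) := by
      rw [Complex.mul_conj, Complex.mul_conj]
      norm_cast
      rw [← Complex.sq_norm, ← Complex.sq_norm, h1]
    simpa [map_sub] using h1'
  have e4 : p * (starRingEnd ℂ) p = (R : ℂ) ^ 2 := by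
    rw [Complex.mul_conj]; norm_cast; rw [← Complex.sq_norm, hp]
  have e5 : q * (starRingEnd ℂ) q = (R : ℂ) ^ 2 := by
    rw [Complex.mul_conj]; norm_cast; rw [← Complex.sq_norm, hq]
  have key : 2 * x * (R : ℂ) ^ 2 * (q - p)
      = (k * (R : ℂ) ^ 2 + (starRingEnd ℂ) k * p * q) * (q - p) := by
    linear_combination (-(p * q * ((starRingEnd ℂ) p - (starRingEnd ℂ) q))) * ht
      + (p * q * (p - q)) * ht' + (-(p * q)) * e3
      + (p * q - (2 * x - k) * q) * e4 + (-(p * q) + (2 * x - k) * p) * e5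
  have key2 : 2 * x * (R : ℂ) ^ 2 = k * (R : ℂ) ^ 2 + (starRingEnd ℂ) k * p * q :=
    mul_right_cancel₀ hqp key
  field_simp
  linear_combination key2

/-- Core complex-number computation for the Steiner point. -/
lemma steiner_core {R : ℝ} (hR : 0 < R) {a b c k a₁ b₁ c₁ : ℂ}
    (ha : ‖a‖ = R) (hb : ‖b‖ = R) (hc : ‖c‖ = R)
    (hab : a ≠ b) (hbc : b ≠ c) (hca : c ≠ a) (hk : k ≠ 0)
    (h1 : ‖a₁ - b‖ = ‖a₁ - c‖)
    (h1p : ∃ t : ℝ, k - a₁ = (t : ℂ) * (b - c))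
    (h2 : ‖b₁ - c‖ = ‖b₁ - a‖)
    (h2p : ∃ t : ℝ, k - b₁ = (t : ℂ) * (c - a))
    (h3 : ‖c₁ - a‖ = ‖c₁ - b‖)
    (h3p : ∃ t : ℝ, k - c₁ = (t : ℂ) * (a - b)) :
    ∃ s : ℂ, (∃ t : ℝ, s - a = (t : ℂ) * (b₁ - c₁)) ∧
      (∃ t : ℝ, s - b = (t : ℂ) * (c₁ - a₁)) ∧
      (∃ t : ℝ, s - c = (t : ℂ) * (a₁ - b₁)) ∧
      ‖s‖ = R := by
  have hR0 : (R : ℂ) ≠ 0 := Complex.ofReal_ne_zero.mpr hR.ne'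
  have ha0 : a ≠ 0 := by
    intro h; rw [h] at ha; simp at ha; exact hR.ne ha
  have hb0 : b ≠ 0 := by
    intro h; rw [h] at hb; simp at hb; exact hR.ne hb
  have hc0 : c ≠ 0 := by
    intro h; rw [h] at hc; simp at hc; exact hR.ne hc
  have hk' : (starRingEnd ℂ) k ≠ 0 := by simpa using hk
  have hcb : c - b ≠ 0 := sub_ne_zero.mpr (Ne.symm hbc)
  have hac : a - c ≠ 0 := sub_ne_zero.mpr (Ne.symm hca)
  have hba : b - a ≠ 0 := sub_ne_zero.mpr (Ne.symm hab)
  have hconjb : (starRingEnd ℂ) b = (R : ℂ) ^ 2 / b := by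
    rw [eq_div_iff hb0]
    rw [mul_comm, Complex.mul_conj]; norm_cast; rw [← Complex.sq_norm, hb]
  have hconjc : (starRingEnd ℂ) c = (R : ℂ) ^ 2 / c := by
    rw [eq_div_iff hc0]
    rw [mul_comm, Complex.mul_conj]; norm_cast; rw [← Complex.sq_norm, hc]
  have hconja : (starRingEnd ℂ) a = (R : ℂ) ^ 2 / a := by
    rw [eq_div_iff ha0]
    rw [mul_comm, Complex.mul_conj]; norm_cast; rw [← Complex.sq_norm, ha]
  have ea : a₁ = (k + (starRingEnd ℂ) k * b * c / (R : ℂ) ^ 2) / 2 :=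
    proj_eq hR hb hc hbc h1 h1p
  have eb : b₁ = (k + (starRingEnd ℂ) k * c * a / (R : ℂ) ^ 2) / 2 :=
    proj_eq hR hc ha hca h2 h2p
  have ec : c₁ = (k + (starRingEnd ℂ) k * a * b / (R : ℂ) ^ 2) / 2 :=
    proj_eq hR ha hb hab h3 h3p
  have main : ∀ p q : ℂ, p ≠ 0 → q ≠ 0 → q - p ≠ 0 →
      (starRingEnd ℂ) p = (R : ℂ) ^ 2 / p → (starRingEnd ℂ) q = (R : ℂ) ^ 2 / q →
      ∃ t : ℝ, (starRingEnd ℂ) k * a * b * c / (k * (R : ℂ) ^ 2) - (a * b * c) / (p * q)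
        = (t : ℂ) * ((k + (starRingEnd ℂ) k * q * (a * b * c) / (p * q) / (R : ℂ) ^ 2) / 2
            - (k + (starRingEnd ℂ) k * (a * b * c) / (p * q) * p / (R : ℂ) ^ 2) / 2) := by
    intro p q hp0 hq0 hqp hcp hcq
    set τ : ℂ := 2 * ((starRingEnd ℂ) k * p * q - k * (R : ℂ) ^ 2) /
      (k * (starRingEnd ℂ) k * (q - p)) with hτdef
    have hden : k * (starRingEnd ℂ) k * (q - p) ≠ 0 :=
      mul_ne_zero (mul_ne_zero hk hk') hqp
    have hden' : (starRingEnd ℂ) (k * (starRingEnd ℂ) k * (q - p)) ≠ 0 := by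
      intro h
      exact hden (by rw [← Complex.conj_conj (k * (starRingEnd ℂ) k * (q - p)), h, map_zero])
    have hcross : (starRingEnd ℂ) (2 * ((starRingEnd ℂ) k * p * q - k * (R : ℂ) ^ 2))
        * (k * (starRingEnd ℂ) k * (q - p))
        = 2 * ((starRingEnd ℂ) k * p * q - k * (R : ℂ) ^ 2)
          * (starRingEnd ℂ) (k * (starRingEnd ℂ) k * (q - p)) := by
      simp only [map_mul, map_sub, map_ofNat, map_pow, Complex.conj_conj,
        Complex.conj_ofReal, hcp, hcq]
      field_simp
      ring
    have hτc : (starRingEnd ℂ) τ = τ := by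
      rw [hτdef, map_div₀, div_eq_div_iff hden' hden]
      exact hcross
    refine ⟨τ.re, ?_⟩
    rw [Complex.conj_eq_iff_re.mp hτc, hτdef, div_mul_eq_mul_div, eq_div_iff hden]
    field_simp
    ring
  refine ⟨(starRingEnd ℂ) k * a * b * c / (k * (R : ℂ) ^ 2), ?_, ?_, ?_, ?_⟩
  · obtain ⟨t, htt⟩ := main b c hb0 hc0 hcb hconjb hconjc
    refine ⟨t, ?_⟩
    rw [eb, ec]
    have h1' : a * b * c / (b * c) = a := by field_simp; try ring
    have h2' : (starRingEnd ℂ) k * c * (a * b * c) / (b * c) = (starRingEnd ℂ) k * c * a := by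
      field_simp; try ring
    have h3' : (starRingEnd ℂ) k * (a * b * c) / (b * c) * b = (starRingEnd ℂ) k * a * b := by
      field_simp; try ring
    calc (starRingEnd ℂ) k * a * b * c / (k * (R : ℂ) ^ 2) - a
        = (starRingEnd ℂ) k * a * b * c / (k * (R : ℂ) ^ 2) - a * b * c / (b * c) := by
          rw [h1']
      _ = (t : ℂ) * ((k + (starRingEnd ℂ) k * c * (a * b * c) / (b * c) / (R : ℂ) ^ 2) / 2
            - (k + (starRingEnd ℂ) k * (a * b * c) / (b * c) * b / (R : ℂ) ^ 2) / 2) := htt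
      _ = (t : ℂ) * ((k + (starRingEnd ℂ) k * c * a / (R : ℂ) ^ 2) / 2
            - (k + (starRingEnd ℂ) k * a * b / (R : ℂ) ^ 2) / 2) := by rw [h2', h3']
  · obtain ⟨t, htt⟩ := main c a hc0 ha0 hac hconjc hconja
    refine ⟨t, ?_⟩
    rw [ec, ea]
    have h1' : a * b * c / (c * a) = b := by field_simp; try ring
    have h2' : (starRingEnd ℂ) k * a * (a * b * c) / (c * a) = (starRingEnd ℂ) k * a * b := by
      field_simp; try ring
    have h3' : (starRingEnd ℂ) k * (a * b * c) / (c * a) * c = (starRingEnd ℂ) k * b * c := by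
      field_simp; try ring
    calc (starRingEnd ℂ) k * a * b * c / (k * (R : ℂ) ^ 2) - b
        = (starRingEnd ℂ) k * a * b * c / (k * (R : ℂ) ^ 2) - a * b * c / (c * a) := by
          rw [h1']
      _ = (t : ℂ) * ((k + (starRingEnd ℂ) k * a * (a * b * c) / (c * a) / (R : ℂ) ^ 2) / 2
            - (k + (starRingEnd ℂ) k * (a * b * c) / (c * a) * c / (R : ℂ) ^ 2) / 2) := htt
      _ = (t : ℂ) * ((k + (starRingEnd ℂ) k * a * b / (R : ℂ) ^ 2) / 2
            - (k + (starRingEnd ℂ) k * b * c / (R : ℂ) ^ 2) / 2) := by rw [h2', h3']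
  · obtain ⟨t, htt⟩ := main a b ha0 hb0 hba hconja hconjb
    refine ⟨t, ?_⟩
    rw [ea, eb]
    have h1' : a * b * c / (a * b) = c := by field_simp; try ring
    have h2' : (starRingEnd ℂ) k * b * (a * b * c) / (a * b) = (starRingEnd ℂ) k * b * c := by
      field_simp; try ring
    have h3' : (starRingEnd ℂ) k * (a * b * c) / (a * b) * a = (starRingEnd ℂ) k * c * a := by
      field_simp; try ring
    calc (starRingEnd ℂ) k * a * b * c / (k * (R : ℂ) ^ 2) - c
        = (starRingEnd ℂ) k * a * b * c / (k * (R : ℂ) ^ 2) - a * b * c / (a * b) := by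
          rw [h1']
      _ = (t : ℂ) * ((k + (starRingEnd ℂ) k * b * (a * b * c) / (a * b) / (R : ℂ) ^ 2) / 2
            - (k + (starRingEnd ℂ) k * (a * b * c) / (a * b) * a / (R : ℂ) ^ 2) / 2) := htt
      _ = (t : ℂ) * ((k + (starRingEnd ℂ) k * b * c / (R : ℂ) ^ 2) / 2
            - (k + (starRingEnd ℂ) k * c * a / (R : ℂ) ^ 2) / 2) := by rw [h2', h3']
  · have hk0 : ‖k‖ ≠ 0 := by simpa using hk
    have hnum : ‖(starRingEnd ℂ) k * a * b * c‖
        = ‖k‖ * (R * R * R) := by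
      rw [norm_mul, norm_mul, norm_mul, Complex.norm_conj, ha, hb, hc]; ring
    have hden : ‖k * (R : ℂ) ^ 2‖ = ‖k‖ * R ^ 2 := by
      rw [norm_mul, norm_pow, Complex.norm_real, Real.norm_eq_abs, abs_of_pos hR]
    rw [norm_div, hnum, hden]
    field_simp

theorem stmt_16 (A B C O K A₁ B₁ C₁ : Pt)
    (hABC : AffineIndependent ℝ ![A, B, C])
    (hK : (dist B C) ^ 2 • (A -ᵥ K) + (dist C A) ^ 2 • (B -ᵥ K) + (dist A B) ^ 2 • (C -ᵥ K)
          = (0 : Pt))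
    (hA₁ : A₁ ∈ AffineSubspace.perpBisector B C) (hA₁p : ∃ t : ℝ, K -ᵥ A₁ = t • (B -ᵥ C))
    (hB₁ : B₁ ∈ AffineSubspace.perpBisector C A) (hB₁p : ∃ t : ℝ, K -ᵥ B₁ = t • (C -ᵥ A))
    (hC₁ : C₁ ∈ AffineSubspace.perpBisector A B) (hC₁p : ∃ t : ℝ, K -ᵥ C₁ = t • (A -ᵥ B))
    (hO1 : dist O A = dist O B) (hO2 : dist O B = dist O C)
    (hKO : K ≠ O) :
    ∃ S : Pt, (∃ t : ℝ, S -ᵥ A = t • (B₁ -ᵥ C₁)) ∧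
      (∃ t : ℝ, S -ᵥ B = t • (C₁ -ᵥ A₁)) ∧
      (∃ t : ℝ, S -ᵥ C = t • (A₁ -ᵥ B₁)) ∧
      dist O S = dist O A := by
  classical
  set φ : Pt ≃ₗᵢ[ℝ] ℂ :=
    (Complex.isometryOfOrthonormal (EuclideanSpace.basisFun (Fin 2) ℝ)).symm with hφdef
  have hd : ∀ X Y : Pt, dist X Y = ‖φ (X - O) - φ (Y - O)‖ := by
    intro X Y
    rw [← map_sub, sub_sub_sub_cancel_right, φ.norm_map, dist_eq_norm]
  have hAB : A ≠ B := by
    have := hABC.injective.ne (show (0 : Fin 3) ≠ 1 by decide)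
    simpa using this
  have hBC : B ≠ C := by
    have := hABC.injective.ne (show (1 : Fin 3) ≠ 2 by decide)
    simpa using this
  have hCA : C ≠ A := by
    have := hABC.injective.ne (show (2 : Fin 3) ≠ 0 by decide)
    simpa using this
  have hR : 0 < dist O A := by
    rcases (dist_nonneg (x := O) (y := A)).eq_or_lt with h | h
    · exfalso
      have hOA : O = A := dist_eq_zero.mp h.symm
      have hOB : O = B := dist_eq_zero.mp (hO1 ▸ h.symm)
      exact hAB (hOA ▸ hOB)
    · exact h
  have ha : ‖φ (A - O)‖ = dist O A := by
    rw [dist_comm, hd A O, sub_self, map_zero, sub_zero]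
  have hb : ‖φ (B - O)‖ = dist O A := by
    rw [hO1, dist_comm, hd B O, sub_self, map_zero, sub_zero]
  have hc : ‖φ (C - O)‖ = dist O A := by
    rw [hO1, hO2, dist_comm, hd C O, sub_self, map_zero, sub_zero]
  have hvne : ∀ X Y : Pt, X ≠ Y → φ (X - O) ≠ φ (Y - O) := by
    intro X Y hXY h
    exact hXY (sub_left_injective (φ.injective h))
  have hk : φ (K - O) ≠ 0 := by
    exact fun h => (sub_ne_zero.mpr hKO) (φ.map_eq_zero_iff.mp h)
  have hpar : ∀ X Y Z : Pt, (∃ t : ℝ, K -ᵥ X = t • (Y -ᵥ Z)) →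
      ∃ t : ℝ, φ (K - O) - φ (X - O) = (t : ℂ) * (φ (Y - O) - φ (Z - O)) := by
    intro X Y Z ⟨t, ht⟩
    refine ⟨t, ?_⟩
    rw [vsub_eq_sub, vsub_eq_sub] at ht
    calc φ (K - O) - φ (X - O) = φ (K - X) := by rw [← map_sub, sub_sub_sub_cancel_right]
      _ = φ (t • (Y - Z)) := by rw [ht]
      _ = t • φ (Y - Z) := by rw [map_smul]
      _ = (t : ℂ) * (φ (Y - O) - φ (Z - O)) := by
          rw [← Complex.real_smul, ← map_sub, sub_sub_sub_cancel_right]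
  have h1 : ‖φ (A₁ - O) - φ (B - O)‖ = ‖φ (A₁ - O) - φ (C - O)‖ := by
    rw [← hd, ← hd]
    exact AffineSubspace.mem_perpBisector_iff_dist_eq.mp hA₁
  have h2 : ‖φ (B₁ - O) - φ (C - O)‖ = ‖φ (B₁ - O) - φ (A - O)‖ := by
    rw [← hd, ← hd]
    exact AffineSubspace.mem_perpBisector_iff_dist_eq.mp hB₁
  have h3 : ‖φ (C₁ - O) - φ (A - O)‖ = ‖φ (C₁ - O) - φ (B - O)‖ := by
    rw [← hd, ← hd]
    exact AffineSubspace.mem_perpBisector_iff_dist_eq.mp hC₁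
  obtain ⟨s, ⟨t₁, hs1⟩, ⟨t₂, hs2⟩, ⟨t₃, hs3⟩, hsR⟩ :=
    steiner_core hR ha hb hc (hvne A B hAB) (hvne B C hBC) (hvne C A hCA) hk
      h1 (hpar A₁ B C hA₁p) h2 (hpar B₁ C A hB₁p) h3 (hpar C₁ A B hC₁p)
  have heq : ∀ (X Y Z : Pt) (t : ℝ), s - φ (X - O) = (t : ℂ) * (φ (Y - O) - φ (Z - O)) →
      (φ.symm s + O) -ᵥ X = t • (Y -ᵥ Z) := by
    intro X Y Z t hst
    have e1 : (φ.symm s + O) -ᵥ X = φ.symm (s - φ (X - O)) := by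
      rw [vsub_eq_sub, map_sub, φ.symm_apply_apply]
      abel
    have e2 : Y -ᵥ Z = φ.symm (φ (Y - O) - φ (Z - O)) := by
      rw [← map_sub, sub_sub_sub_cancel_right, φ.symm_apply_apply, vsub_eq_sub]
    rw [e1, e2, ← map_smul]
    exact congrArg φ.symm (by rw [Complex.real_smul]; exact hst)
  refine ⟨φ.symm s + O, ⟨t₁, heq A B₁ C₁ t₁ hs1⟩, ⟨t₂, heq B C₁ A₁ t₂ hs2⟩,
    ⟨t₃, heq C A₁ B₁ t₃ hs3⟩, ?_⟩
  rw [dist_comm]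
  calc dist (φ.symm s + O) O = ‖φ.symm s + O - O‖ := dist_eq_norm _ _
    _ = ‖φ.symm s‖ := by rw [add_sub_cancel_right]
    _ = ‖s‖ := by rw [φ.symm.norm_map]
    _ = dist O A := hsR
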